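/- For all n ≥ 0 and parameters a, b (with denominators nonzero), the closed forms c_{2n} = (a)_n(a−b+1/2)_n/(n!(b+1/2)_n) and c_{2n+1} = (−2a/(2b+1))·(a+1)_n(a−b+1/2)_n/(n!(b+3/2)_n) satisfy the three-term recurrence (m)(m+2b)c_m = (m+2(a−1))(m+2(a−b−1))c_{m−2} − 2(m+a−1)c_{m−1} for every m ≥ 2. -/

import Mathlib

open scoped Nat

/-- Pochhammer symbol (rising factorial). -/
noncomputable def poch (a : ℝ) (n : ℕ) : ℝ := (ascPochhammer ℝ n).eval a

/-- Gauss hypergeometric series ₂F₁(a,b;c;z). -/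
noncomputable def F (a b c z : ℝ) : ℝ :=
  ∑' n : ℕ, poch a n * poch b n / (poch c n * (n ! : ℝ)) * z ^ n

lemma poch_succ (a : ℝ) (n : ℕ) : poch a (n+1) = poch a n * (a + n) := by
  simp [poch, ascPochhammer_succ_eval]

lemma poch_succ_left (a : ℝ) (n : ℕ) : poch a (n+1) = a * poch (a+1) n := by
  simp [poch, ascPochhammer_succ_left, Polynomial.eval_comp]

lemma poch_ne (x : ℝ) (hx : ∀ k : ℕ, x + (k : ℝ) ≠ 0) (n : ℕ) : poch x n ≠ 0 := by
  induction n with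
  | zero => simp [poch]
  | succ n ih => rw [poch_succ]; exact mul_ne_zero ih (hx n)

set_option maxHeartbeats 2000000 in
theorem closed_form_satisfies_recurrence_first (a b : ℝ)
    (hb : ∀ k : ℕ, 2 * b + 1 + (k : ℝ) ≠ 0)
    (hwell : ∀ m : ℕ, 1 ≤ m → (m : ℝ) * ((m : ℝ) + 2 * b) ≠ 0)
    (c : ℕ → ℝ)
    (hceven : ∀ n : ℕ, c (2 * n) = poch a n * poch (a - b + 1/2) n /
      ((n ! : ℝ) * poch (b + 1/2) n))
    (hcodd : ∀ n : ℕ, c (2 * n + 1) = (-2 * a / (2 * b + 1)) *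
      (poch (a + 1) n * poch (a - b + 1/2) n / ((n ! : ℝ) * poch (b + 3/2) n))) :
    ∀ m : ℕ, 2 ≤ m →
      (m : ℝ) * ((m : ℝ) + 2 * b) * c m =
        ((m : ℝ) + 2 * (a - 1)) * ((m : ℝ) + 2 * (a - b - 1)) * c (m - 2)
          - 2 * ((m : ℝ) + a - 1) * c (m - 1) := by
  have hQ : ∀ n : ℕ, poch (b + 1/2) n ≠ 0 := by
    refine poch_ne _ fun k h => hb (2*k) ?_
    push_cast; linarith
  have hR : ∀ n : ℕ, poch (b + 3/2) n ≠ 0 := by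
    refine poch_ne _ fun k h => hb (2*k+2) ?_
    push_cast; linarith
  have hb0 : (2*b+1 : ℝ) ≠ 0 := by have := hb 0; simpa using this
  have hbn : ∀ n : ℕ, b + 1/2 + (n:ℝ) ≠ 0 := fun n h => hb (2*n) (by push_cast; linarith)
  have hAB : ∀ n : ℕ, poch a n * (a + n) = a * poch (a+1) n := fun n => by
    rw [← poch_succ, poch_succ_left]
  have hQR : ∀ n : ℕ, poch (b+1/2) n * (b + 1/2 + n) = (b+1/2) * poch (b+3/2) n := fun n => by
    rw [← poch_succ, poch_succ_left, show b+1/2+1 = b+3/2 by ring]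
  intro m hm
  obtain ⟨k, rfl⟩ : ∃ k, m = k + 2 := ⟨m - 2, by omega⟩
  have hf : ∀ n : ℕ, (n ! : ℝ) ≠ 0 := fun n => Nat.cast_ne_zero.2 (Nat.factorial_ne_zero n)
  rcases Nat.even_or_odd k with ⟨n, rfl⟩ | ⟨n, rfl⟩
  · -- even: m = 2(n+1)
    have e1 : n + n + 2 = 2 * (n+1) := by ring
    have e2 : 2 * (n+1) - 2 = 2 * n := by omega
    have e3 : 2 * (n+1) - 1 = 2 * n + 1 := by omega
    rw [e1, e2, e3, hceven, hceven, hcodd, poch_succ, poch_succ, poch_succ,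
      Nat.factorial_succ]
    push_cast
    have hn1 : ((n:ℝ)+1) ≠ 0 := by positivity
    set A := poch a n with hA
    set B := poch (a+1) n with hB
    set P := poch (a-b+1/2) n with hP
    set Q := poch (b+1/2) n with hQn
    set R := poch (b+3/2) n with hRn
    have h1 := hAB n
    have h2 := hQR n
    have hQ0 : Q ≠ 0 := hQ n
    have hR0 : R ≠ 0 := hR n
    have hf0 : (n ! : ℝ) ≠ 0 := hf n
    have hbn0 : b + 1/2 + (n:ℝ) ≠ 0 := hbn n
    have hbn2 : b*2+1+(n:ℝ)*2 ≠ 0 := fun h => hbn0 (by linarith)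
    rw [← hA, ← hB, ← hP, ← hQn, ← hRn] at *
    field_simp
    rw [div_eq_iff (fun h => hbn0 (by linarith))]
    linear_combination (P*Q*(2*b+1+2*(n:ℝ))*(2*(n:ℝ)+1+a)) * h1
      + (-2*P*(2*(n:ℝ)+1+a)*A*(a+(n:ℝ))) * h2
  · -- odd: m = 2(n+1)+1
    have e1 : 2 * n + 1 + 2 = 2 * (n+1) + 1 := by omega
    have e2 : 2 * (n+1) + 1 - 2 = 2 * n + 1 := by omega
    have e3 : 2 * (n+1) + 1 - 1 = 2 * (n+1) := by omega
    rw [e1, e2, e3, hcodd, hcodd, hceven]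
    simp only [poch_succ, Nat.factorial_succ]
    push_cast
    have hn1 : ((n:ℝ)+1) ≠ 0 := by positivity
    set A := poch a n with hA
    set B := poch (a+1) n with hB
    set P := poch (a-b+1/2) n with hP
    set Q := poch (b+1/2) n with hQn
    set R := poch (b+3/2) n with hRn
    have h1 := hAB n
    have h2 := hQR n
    have hQ0 : Q ≠ 0 := hQ n
    have hR0 : R ≠ 0 := hR n
    have hf0 : (n ! : ℝ) ≠ 0 := hf n
    have hbn0 : b + 1/2 + (n:ℝ) ≠ 0 := hbn n
    have hbn3 : b + 3/2 + (n:ℝ) ≠ 0 := fun h => hb (2*n+2) (by push_cast; linarith)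
    have hbn2 : b*2+1+(n:ℝ)*2 ≠ 0 := fun h => hbn0 (by linarith)
    have hbn4 : b*2+3+(n:ℝ)*2 ≠ 0 := fun h => hbn3 (by linarith)
    rw [← hA, ← hB, ← hP, ← hQn, ← hRn] at *
    field_simp
    have hEi : (2*b+3+2*(n:ℝ)) * (2*b+3+2*(n:ℝ))⁻¹ = 1 := mul_inv_cancel₀ (fun h => hbn3 (by linarith))
    have hDi : (2*b+1+2*(n:ℝ)) * (2*b+1+2*(n:ℝ))⁻¹ = 1 := mul_inv_cancel₀ (fun h => hbn0 (by linarith))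
    linear_combination
      (-((2*((n:ℝ)+1)+1)*a*B*(a+1+(n:ℝ))*P*(2*(a-b)+1+2*(n:ℝ))*Q)) * hEi
      + (P*((2*(a-b)+1+2*(n:ℝ))*(2*(n:ℝ)+2+a))*Q*a*B) * hDi
      + (P*((2*(a-b)+1+2*(n:ℝ))*(2*(n:ℝ)+2+a))*(2*b+1+2*(n:ℝ))⁻¹*(2*b+1)*R) * h1
      + (-2*P*((2*(a-b)+1+2*(n:ℝ))*(2*(n:ℝ)+2+a))*(2*b+1+2*(n:ℝ))⁻¹*a*B) * h2
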